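/- Let c_0 > 0 and c_1, s_1 ∈ ℝ, set r² = (c_1² + s_1²)/c_0², and define the 3×3 real matrices A_x = [[0, 1, 0], [1/2 − (c_1² − s_1²)/(2c_0²), c_1/c_0, −s_1/c_0], [−c_1 s_1/c_0², s_1/c_0, c_1/c_0]] and A_y = [[0, 0, 1], [−c_1 s_1/c_0², s_1/c_0, c_1/c_0], [1/2 + (c_1² − s_1²)/(2c_0²), −c_1/c_0, s_1/c_0]]. Then for all a, b ∈ ℝ, the characteristic polynomial of a·A_x + b·A_y is p(λ) = (λ − (a c_1 + b s_1)/c_0) · (λ² − ((a c_1 + b s_1)/c_0) λ − ((a² + b²)/2)(1 − r²)). -/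

import Mathlib

open Matrix Polynomial

/-- The `x`-direction flux Jacobian of the single-node Poisson-EQMOM system. -/
noncomputable def Ax (c0 c1 s1 : ℝ) : Matrix (Fin 3) (Fin 3) ℝ :=
  !![0, 1, 0;
     1 / 2 - (c1 ^ 2 - s1 ^ 2) / (2 * c0 ^ 2), c1 / c0, -s1 / c0;
     -(c1 * s1) / c0 ^ 2, s1 / c0, c1 / c0]

/-- The `y`-direction flux Jacobian of the single-node Poisson-EQMOM system. -/
noncomputable def Ay (c0 c1 s1 : ℝ) : Matrix (Fin 3) (Fin 3) ℝ :=
  !![0, 0, 1;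
     -(c1 * s1) / c0 ^ 2, s1 / c0, c1 / c0;
     1 / 2 + (c1 ^ 2 - s1 ^ 2) / (2 * c0 ^ 2), -c1 / c0, s1 / c0]

set_option maxHeartbeats 2000000 in
/-- With `r² = (c1² + s1²)/c0²`, the characteristic polynomial of `a·Ax + b·Ay` is
`(λ − (a c1 + b s1)/c0)(λ² − ((a c1 + b s1)/c0) λ − ((a² + b²)/2)(1 − r²))`. -/
theorem charpoly_eq (c0 c1 s1 : ℝ) (hc0 : 0 < c0) (a b : ℝ) :
    (a • Ax c0 c1 s1 + b • Ay c0 c1 s1).charpoly =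
      (X - C ((a * c1 + b * s1) / c0)) *
        (X ^ 2 - C ((a * c1 + b * s1) / c0) * X -
          C ((a ^ 2 + b ^ 2) / 2 * (1 - (c1 ^ 2 + s1 ^ 2) / c0 ^ 2))) := by
  have h : c0 ≠ 0 := hc0.ne'
  rw [Matrix.charpoly, Matrix.det_fin_three]
  apply Polynomial.funext
  intro x
  simp only [charmatrix_apply, Ax, Ay, Matrix.add_apply, Matrix.smul_apply,
    Matrix.cons_val', Matrix.cons_val_zero, Matrix.cons_val_one, Matrix.head_cons,
    Matrix.empty_val', Matrix.cons_val_fin_one, Matrix.cons_val_two, Matrix.tail_cons,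
    Matrix.diagonal_apply, Matrix.one_apply, smul_eq_mul, eval_add, eval_sub, eval_mul,
    eval_neg, eval_pow, eval_X, eval_C, Fin.isValue, Fin.reduceEq, reduceIte, eval_zero, Matrix.of_apply]
  norm_num
  field_simp
  ring
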